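/- Let Y = (Y¹,…,Yᵐ) be an exchangeable random vector in ℝᵐ with finite p-th moments (p ≥ 1), let μ ∈ P(ℝ) with finite p-th moment, and let n ≤ m with m = kn + ℓ, 0 ≤ ℓ ≤ n−1. Then (1/2^{p−1})·E[W_p^p(μ̂_Y, μ)] ≤ (kn/m)·(W_p^p(Law^n(Y), μ^{⊗n}) + ε_{n,p}(μ)) + (ℓ/m)·(W_p^p(Law^ℓ(Y), μ^{⊗ℓ}) + ε_{ℓ,p}(μ)), where Law^j(Y) denotes the joint law of the first j components of Y, μ̂_Y is the empirical measure, and ε_{j,p}(μ) = E[W_p^p((1/j)∑ᵢ δ_{Zⁱ}, μ)] for Z¹,…,Zʲ i.i.d. ∼ μ (with the ℓ = 0 terms interpreted as zero). -/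

import Mathlib

open MeasureTheory ENNReal

/-- `W_p^p` on `P(ℝ)` with cost `|x-y|^p`: infimum over couplings. -/
noncomputable def WppR (p : ℝ) (μ ν : Measure ℝ) : ℝ≥0∞ :=
  ⨅ (π : Measure (ℝ × ℝ)) (_ : π.map Prod.fst = μ ∧ π.map Prod.snd = ν),
    ∫⁻ z, ENNReal.ofReal (|z.1 - z.2| ^ p) ∂π

/-- `W_p^p` on `P(ℝⁿ)` with respect to the normalized cost
`d_{n,p}(x,y)^p = (1/n)∑ᵢ |xⁱ-yⁱ|^p`. -/
noncomputable def WppVec (p : ℝ) (n : ℕ) (μ ν : Measure (Fin n → ℝ)) : ℝ≥0∞ :=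
  ⨅ (π : Measure ((Fin n → ℝ) × (Fin n → ℝ)))
    (_ : π.map Prod.fst = μ ∧ π.map Prod.snd = ν),
      ∫⁻ z, ENNReal.ofReal ((n : ℝ)⁻¹ * ∑ i, |z.1 i - z.2 i| ^ p) ∂π

/-- The empirical measure `(1/N)·∑ᵢ δ_{x i}`. -/
noncomputable def empMeas (N : ℕ) (x : Fin N → ℝ) : Measure ℝ :=
  (N : ℝ≥0∞)⁻¹ • ∑ i, Measure.dirac (x i)

/-- `ε_{n,p}(μ) = E[W_p^p((1/n)∑ δ_{Zⁱ}, μ)]` for `Z¹,…,Zⁿ` i.i.d. with law `μ`. -/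
noncomputable def epsNp (p : ℝ) (n : ℕ) (μ : Measure ℝ) : ℝ≥0∞ :=
  ∫⁻ z : Fin n → ℝ, WppR p (empMeas n z) μ ∂(Measure.pi fun _ : Fin n => μ)

lemma measurable_cost (p : ℝ) :
    Measurable fun z : ℝ × ℝ => ENNReal.ofReal (|z.1 - z.2| ^ p) :=
  ENNReal.measurable_ofReal.comp ((measurable_fst.sub measurable_snd).abs.pow_const p)

lemma rpow_iInf' {ι : Sort*} (s : ι → ℝ≥0∞) {q : ℝ} (hq : 0 < q) :
    (⨅ i, s i) ^ q = ⨅ i, (s i) ^ q := by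
  apply le_antisymm
  · exact le_iInf fun i => ENNReal.rpow_le_rpow (iInf_le _ i) hq.le
  · have h1 : (⨅ i, (s i) ^ q) ^ q⁻¹ ≤ ⨅ i, s i := by
      refine le_iInf fun i => ?_
      have := ENNReal.rpow_le_rpow (iInf_le (fun i => (s i) ^ q) i) (inv_pos.2 hq).le
      rwa [← ENNReal.rpow_mul, mul_inv_cancel₀ hq.ne', ENNReal.rpow_one] at this
    calc (⨅ i, (s i) ^ q) = ((⨅ i, (s i) ^ q) ^ q⁻¹) ^ q := by
          rw [← ENNReal.rpow_mul, inv_mul_cancel₀ hq.ne', ENNReal.rpow_one]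
      _ ≤ (⨅ i, s i) ^ q := ENNReal.rpow_le_rpow h1 hq.le

lemma WppR_le_cost {p : ℝ} {μ ν : Measure ℝ} (π : Measure (ℝ × ℝ))
    (h1 : π.map Prod.fst = μ) (h2 : π.map Prod.snd = ν) :
    WppR p μ ν ≤ ∫⁻ z, ENNReal.ofReal (|z.1 - z.2| ^ p) ∂π :=
  iInf₂_le π ⟨h1, h2⟩

lemma two_rpow_helper {p : ℝ} (hp : 1 ≤ p) (a b : ℝ≥0∞) :
    (a + b) ^ p ≤ ENNReal.ofReal ((2:ℝ) ^ (p-1)) * (a ^ p + b ^ p) := by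
  have h2 : ENNReal.ofReal ((2:ℝ) ^ (p-1)) = (2:ℝ≥0∞) ^ (p-1) := by
    rw [← ENNReal.ofReal_rpow_of_pos (by norm_num : (0:ℝ) < 2)]
    norm_num
  have hp0 : (0:ℝ) ≤ p := by linarith
  have key := ENNReal.rpow_arith_mean_le_arith_mean2_rpow (1/2) (1/2) (2*a) (2*b)
    (ENNReal.add_halves 1) hp
  have e0 : ∀ x : ℝ≥0∞, (1/2 : ℝ≥0∞) * (2*x) = x := fun x => by
    rw [← mul_assoc, one_div, ENNReal.inv_mul_cancel two_ne_zero ENNReal.ofNat_ne_top, one_mul]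
  rw [e0 a, e0 b, ENNReal.mul_rpow_of_nonneg _ _ hp0, ENNReal.mul_rpow_of_nonneg _ _ hp0] at key
  have h2p : (2:ℝ≥0∞) ^ p = 2 * 2 ^ (p-1) := by
    have : p = 1 + (p-1) := by ring
    rw [this, ENNReal.rpow_add _ _ two_ne_zero ENNReal.ofNat_ne_top, ENNReal.rpow_one]
    ring_nf
  have e1 : ∀ x : ℝ≥0∞, (1/2 : ℝ≥0∞) * ((2:ℝ≥0∞) ^ p * x) = 2 ^ (p-1) * x := fun x => by
    rw [h2p, mul_assoc 2, e0]
  rw [e1, e1] at key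
  rw [h2, mul_add]
  exact key

lemma map_finset_sum_meas {α β ι : Type*} [MeasurableSpace α] [MeasurableSpace β]
    (s : Finset ι) (μ : ι → Measure α) {f : α → β} (hf : Measurable f) :
    (∑ i ∈ s, μ i).map f = ∑ i ∈ s, (μ i).map f := by
  classical
  induction s using Finset.induction_on with
  | empty => simp [Measure.map_zero]
  | insert _ _ h ih => simp [Finset.sum_insert h, Measure.map_add _ _ hf, ih]

section Glue

variable {p : ℝ} {n : ℕ} (y z : Fin n → ℝ) (μ : Measure ℝ)

lemma glue_bound (hp : 1 ≤ p) (hn : 0 < n) [IsProbabilityMeasure μ]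
    (π' : Measure (ℝ × ℝ))
    (h1 : π'.map Prod.fst = empMeas n z) (h2 : π'.map Prod.snd = μ) :
    (WppR p (empMeas n y) μ) ^ p⁻¹ ≤
      (ENNReal.ofReal ((n:ℝ)⁻¹ * ∑ i, |y i - z i| ^ p)) ^ p⁻¹ +
      (∫⁻ w, ENNReal.ofReal (|w.1 - w.2| ^ p) ∂π') ^ p⁻¹ := by
  classical
  have hp0 : (0:ℝ) < p := lt_of_lt_of_le one_pos hp
  set S : ℝ → Set (ℝ × ℝ) := fun a => {a} ×ˢ (Set.univ : Set ℝ) with hS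
  have hSmeas : ∀ a, MeasurableSet (S a) :=
    fun a => (measurableSet_singleton a).prod MeasurableSet.univ
  have hfstpre : ∀ a : ℝ, Prod.fst ⁻¹' ({a} : Set ℝ) = S a := by
    intro a; ext w
    simp only [Set.mem_preimage, Set.mem_singleton_iff, hS, Set.mem_prod, Set.mem_univ, and_true]
  set C : ℝ → ℝ≥0∞ := fun a => π' (S a) with hC
  set T : Finset ℝ := Finset.image z Finset.univ with hT
  set card : ℝ → ℕ := fun a => (Finset.univ.filter fun i => z i = a).card with hcard
  have hcard' : ∀ a : ℝ, ((Finset.univ.filter fun i => z i = a).card : ℝ≥0∞)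
      = ∑ x : Fin n, if z x = a then 1 else 0 := by
    intro a
    rw [Finset.card_filter]
    push_cast
    exact Finset.sum_congr rfl fun i _ => by by_cases h : z i = a <;> simp [h]
  -- value of C
  have hCval : ∀ a, C a = (n:ℝ≥0∞)⁻¹ * (card a : ℝ≥0∞) := by
    intro a
    have : C a = (π'.map Prod.fst) {a} := by
      rw [Measure.map_apply measurable_fst (measurableSet_singleton a), hfstpre]
    rw [this, h1]
    simp only [empMeas, Measure.smul_apply, smul_eq_mul]
    congr 1
    rw [Measure.finset_sum_apply]
    simp only [Measure.dirac_apply, Set.indicator_apply, Set.mem_singleton_iff, Pi.one_apply]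
    rw [hcard']
  have hπprob : IsProbabilityMeasure π' := by
    constructor
    have := congrArg (fun m : Measure ℝ => m Set.univ) h2
    simp only [Measure.map_apply measurable_snd MeasurableSet.univ, Set.preimage_univ] at this
    rw [this]; exact measure_univ
  have hCtop : ∀ a, C a ≠ ∞ := fun a => (measure_lt_top π' _).ne
  have hCz0 : ∀ i, C (z i) ≠ 0 := by
    intro i
    rw [hCval]
    refine mul_ne_zero (by simp [hn.ne']) ?_
    simp only [ne_eq, Nat.cast_eq_zero, Finset.card_eq_zero]
    intro h
    have : i ∈ Finset.univ.filter fun j => z j = z i := by simp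
    rw [hcard] at h
    simp_all [h]
  have hmemT0 : ∀ a ∈ T, C a ≠ 0 := by
    intro a ha
    obtain ⟨i, _, rfl⟩ := Finset.mem_image.1 ha
    exact hCz0 i
  -- the conditional measures
  set M : ℝ → Measure ℝ := fun a => (π'.restrict (S a)).map Prod.snd with hM
  set ν : ℝ → Measure ℝ := fun a => (C a)⁻¹ • M a with hν
  have hMtot : ∀ a, M a Set.univ = C a := by
    intro a
    rw [hM]
    simp only [Measure.map_apply measurable_snd MeasurableSet.univ, Set.preimage_univ,
      Measure.restrict_apply_univ]
    rfl
  have hνprob : ∀ i, IsProbabilityMeasure (ν (z i)) := by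
    intro i
    constructor
    rw [hν]
    simp only [Measure.smul_apply, smul_eq_mul, hMtot]
    exact ENNReal.inv_mul_cancel (hCz0 i) (hCtop _)
  -- regrouping engine
  have regroup : ∀ G : ℝ → ℝ≥0∞,
      (n:ℝ≥0∞)⁻¹ * ∑ i : Fin n, (C (z i))⁻¹ * G (z i) = ∑ a ∈ T, G a := by
    intro G
    have hfib := Finset.sum_fiberwise_of_maps_to
      (fun i (_ : i ∈ Finset.univ) => Finset.mem_image_of_mem z (Finset.mem_univ i))
      (fun i => (C (z i))⁻¹ * G (z i))
    rw [← hfib, Finset.mul_sum]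
    refine Finset.sum_congr rfl fun a ha => ?_
    have : ∀ i ∈ Finset.univ.filter fun i => z i = a,
        (C (z i))⁻¹ * G (z i) = (C a)⁻¹ * G a := by
      intro i hi
      rw [(Finset.mem_filter.1 hi).2]
    rw [Finset.sum_congr rfl this, Finset.sum_const, nsmul_eq_mul, ← mul_assoc, ← hCval a,
      ← mul_assoc, ENNReal.mul_inv_cancel (hmemT0 a ha) (hCtop a), one_mul]
  -- restriction decomposition
  have hTmeas : MeasurableSet (↑T : Set ℝ) := T.finite_toSet.measurableSet
  have hres_sum : π'.restrict ((↑T : Set ℝ) ×ˢ Set.univ) = ∑ a ∈ T, π'.restrict (S a) := by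
    ext s hs
    rw [Measure.restrict_apply hs, Measure.finset_sum_apply]
    have hsplit : s ∩ (↑T : Set ℝ) ×ˢ Set.univ = ⋃ a ∈ T, s ∩ S a := by
      ext w
      simp only [Set.mem_inter_iff, Set.mem_prod, Set.mem_univ, and_true, Set.mem_iUnion, hS,
        Set.mem_singleton_iff, Finset.mem_coe]
      constructor
      · rintro ⟨hw, hwT⟩; exact ⟨w.1, hwT, hw, rfl⟩
      · rintro ⟨a, haT, hw, rfl⟩; exact ⟨hw, haT⟩
    rw [hsplit, measure_biUnion_finset]
    · exact Finset.sum_congr rfl fun a _ => (Measure.restrict_apply hs).symm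
    · intro a _ b _ hab
      refine Set.disjoint_left.2 fun w hw hw' => hab ?_
      have h1' := hw.2.1
      have h2' := hw'.2.1
      simp only [hS, Set.mem_prod, Set.mem_singleton_iff] at h1' h2'
      rw [← h1', ← h2']
    · exact fun a _ => hs.inter (hSmeas a)
  have hTnull : π'.restrict ((↑T : Set ℝ) ×ˢ Set.univ) = π' := by
    apply Measure.restrict_eq_self_of_ae_mem
    rw [MeasureTheory.ae_iff]
    have hcompl : {w : ℝ × ℝ | ¬ w ∈ (↑T : Set ℝ) ×ˢ (Set.univ : Set ℝ)}
        = ((↑T : Set ℝ)ᶜ) ×ˢ (Set.univ : Set ℝ) := by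
      ext w; simp
    rw [hcompl]
    have : ((↑T : Set ℝ)ᶜ) ×ˢ (Set.univ : Set ℝ) = Prod.fst ⁻¹' ((↑T : Set ℝ)ᶜ) := by
      ext w; simp
    rw [this, ← Measure.map_apply measurable_fst hTmeas.compl, h1]
    simp only [empMeas, Measure.smul_apply, smul_eq_mul]
    rw [Measure.finset_sum_apply]
    have : ∀ i : Fin n, Measure.dirac (z i) ((↑T : Set ℝ)ᶜ) = 0 := by
      intro i
      rw [Measure.dirac_apply]
      simp [hT, Set.indicator_apply]
    simp [this]
  -- glued measure
  set q : Fin n → Measure ((ℝ × ℝ) × ℝ) :=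
    fun i => (ν (z i)).map (fun u => ((y i, z i), u)) with hq
  have hqmeas : ∀ i : Fin n, Measurable fun u : ℝ => ((y i, z i), u) :=
    fun i => measurable_const.prodMk measurable_id
  set γ : Measure ((ℝ × ℝ) × ℝ) := (n:ℝ≥0∞)⁻¹ • ∑ i, q i with hγ
  set φ : ((ℝ × ℝ) × ℝ) → ℝ × ℝ := fun t => (t.1.1, t.2) with hφdef
  have hφ : Measurable φ := (measurable_fst.fst).prodMk measurable_snd
  have hm1 : (γ.map φ).map Prod.fst = empMeas n y := by
    rw [Measure.map_map measurable_fst hφ]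
    have hcomp : (Prod.fst ∘ φ) = fun t : (ℝ×ℝ)×ℝ => t.1.1 := rfl
    rw [hcomp, hγ, Measure.map_smul, map_finset_sum_meas _ _ measurable_fst.fst]
    have : ∀ i : Fin n, (q i).map (fun t : (ℝ×ℝ)×ℝ => t.1.1) = Measure.dirac (y i) := by
      intro i
      haveI := hνprob i
      rw [hq, Measure.map_map measurable_fst.fst (hqmeas i)]
      have : ((fun t : (ℝ×ℝ)×ℝ => t.1.1) ∘ fun u : ℝ => ((y i, z i), u)) = fun _ => y i := rfl
      rw [this, Measure.map_const, measure_univ, one_smul]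
    rw [Finset.sum_congr rfl fun i _ => this i]
    rfl
  have hmix : ((n:ℝ≥0∞)⁻¹ • ∑ i : Fin n, ν (z i)) = μ := by
    ext s hs
    simp only [Measure.smul_apply, Measure.finset_sum_apply, smul_eq_mul]
    have h3 : ∀ i : Fin n, ν (z i) s = (C (z i))⁻¹ * (M (z i)) s := by
      intro i; rw [hν]; simp [Measure.smul_apply]
    rw [Finset.sum_congr rfl fun i _ => h3 i, regroup (fun a => M a s)]
    have h4 : ∀ a : ℝ, M a s = (π'.restrict (S a)) (Prod.snd ⁻¹' s) := fun a =>
      Measure.map_apply measurable_snd hs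
    rw [Finset.sum_congr rfl fun a _ => h4 a, ← Measure.finset_sum_apply, ← hres_sum, hTnull,
      ← Measure.map_apply measurable_snd hs, h2]
  have hm2 : (γ.map φ).map Prod.snd = μ := by
    rw [Measure.map_map measurable_snd hφ]
    have hcomp : (Prod.snd ∘ φ) = fun t : (ℝ×ℝ)×ℝ => t.2 := rfl
    rw [hcomp, hγ, Measure.map_smul, map_finset_sum_meas _ _ measurable_snd]
    have hqi : ∀ i : Fin n, (q i).map (fun t : (ℝ×ℝ)×ℝ => t.2) = ν (z i) := by
      intro i
      rw [hq, Measure.map_map measurable_snd (hqmeas i)]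
      have : ((fun t : (ℝ×ℝ)×ℝ => t.2) ∘ fun u : ℝ => ((y i, z i), u)) = id := rfl
      rw [this, Measure.map_id]
    rw [Finset.sum_congr rfl fun i _ => hqi i, hmix]
  -- cost
  set F : ((ℝ×ℝ)×ℝ) → ℝ≥0∞ := fun t => ENNReal.ofReal |t.1.1 - t.1.2| with hF
  set G : ((ℝ×ℝ)×ℝ) → ℝ≥0∞ := fun t => ENNReal.ofReal |t.1.2 - t.2| with hG
  have hFmeas : Measurable F :=
    ENNReal.measurable_ofReal.comp ((measurable_fst.fst.sub measurable_fst.snd).abs)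
  have hGmeas : Measurable G :=
    ENNReal.measurable_ofReal.comp ((measurable_fst.snd.sub measurable_snd).abs)
  have hrpmeas : Measurable fun x : ℝ≥0∞ => x ^ p := ENNReal.continuous_rpow_const.measurable
  have hcost1 : ∫⁻ w, ENNReal.ofReal (|w.1 - w.2| ^ p) ∂(γ.map φ)
      = ∫⁻ t, ENNReal.ofReal (|t.1.1 - t.2| ^ p) ∂γ := lintegral_map (measurable_cost p) hφ
  have hptwise : ∀ t : (ℝ×ℝ)×ℝ, ENNReal.ofReal (|t.1.1 - t.2| ^ p) ≤ (F + G) t ^ p := by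
    intro t
    rw [← ENNReal.ofReal_rpow_of_nonneg (abs_nonneg _) hp0.le]
    refine ENNReal.rpow_le_rpow ?_ hp0.le
    rw [Pi.add_apply, hF, hG]
    calc ENNReal.ofReal |t.1.1 - t.2|
        ≤ ENNReal.ofReal (|t.1.1 - t.1.2| + |t.1.2 - t.2|) :=
          ENNReal.ofReal_le_ofReal (abs_sub_le _ _ _)
      _ = _ := ENNReal.ofReal_add (abs_nonneg _) (abs_nonneg _)
  have hLp := ENNReal.lintegral_Lp_add_le (μ := γ) hFmeas.aemeasurable hGmeas.aemeasurable hp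
  have hA : ∫⁻ t, F t ^ p ∂γ = ENNReal.ofReal ((n:ℝ)⁻¹ * ∑ i, |y i - z i| ^ p) := by
    rw [hγ, lintegral_smul_measure, smul_eq_mul, lintegral_finset_sum_measure]
    have h5 : ∀ i : Fin n, ∫⁻ t, F t ^ p ∂(q i) = ENNReal.ofReal (|y i - z i| ^ p) := by
      intro i
      haveI := hνprob i
      have hFp : Measurable fun t : (ℝ×ℝ)×ℝ => F t ^ p := hrpmeas.comp hFmeas
      rw [hq, lintegral_map hFp (hqmeas i)]
      have : (fun u : ℝ => F ((y i, z i), u) ^ p)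
          = fun _ : ℝ => ENNReal.ofReal |y i - z i| ^ p := rfl
      rw [this, lintegral_const, measure_univ, mul_one,
        ENNReal.ofReal_rpow_of_nonneg (abs_nonneg _) hp0.le]
    rw [Finset.sum_congr rfl fun i _ => h5 i,
      ENNReal.ofReal_mul (inv_nonneg.2 (Nat.cast_nonneg n)),
      ENNReal.ofReal_sum_of_nonneg fun i _ => Real.rpow_nonneg (abs_nonneg _) p,
      ENNReal.ofReal_inv_of_pos (by exact_mod_cast hn), ENNReal.ofReal_natCast]
  have hB : ∫⁻ t, G t ^ p ∂γ = ∫⁻ w, ENNReal.ofReal (|w.1 - w.2| ^ p) ∂π' := by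
    rw [hγ, lintegral_smul_measure, smul_eq_mul, lintegral_finset_sum_measure]
    have hstep : ∀ i : Fin n, ∫⁻ t, G t ^ p ∂(q i)
        = (C (z i))⁻¹ * ∫⁻ w in S (z i), ENNReal.ofReal (|w.1 - w.2| ^ p) ∂π' := by
      intro i
      have hGp : Measurable fun t : (ℝ×ℝ)×ℝ => G t ^ p := hrpmeas.comp hGmeas
      rw [hq, lintegral_map hGp (hqmeas i)]
      have h6 : (fun u : ℝ => G ((y i, z i), u) ^ p)
          = fun u : ℝ => ENNReal.ofReal (|z i - u| ^ p) := by
        funext u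
        rw [hG]
        exact (ENNReal.ofReal_rpow_of_nonneg (abs_nonneg _) hp0.le)
      rw [h6, hν, lintegral_smul_measure]
      congr 1
      have hmeas2 : Measurable fun u : ℝ => ENNReal.ofReal (|z i - u| ^ p) :=
        ENNReal.measurable_ofReal.comp ((measurable_const.sub measurable_id).abs.pow_const p)
      rw [hM, lintegral_map hmeas2 measurable_snd]
      refine setLIntegral_congr_fun (hSmeas _) ?_
      intro w hw
      have : w.1 = z i := by
        simpa [hS] using hw.1
      simp only [this]
    rw [Finset.sum_congr rfl fun i _ => hstep i,
      regroup (fun a => ∫⁻ w in S a, ENNReal.ofReal (|w.1 - w.2| ^ p) ∂π')]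
    have : ∑ a ∈ T, ∫⁻ w in S a, ENNReal.ofReal (|w.1 - w.2| ^ p) ∂π'
        = ∫⁻ w, ENNReal.ofReal (|w.1 - w.2| ^ p) ∂(π'.restrict ((↑T : Set ℝ) ×ˢ Set.univ)) := by
      rw [hres_sum, lintegral_finset_sum_measure]
    rw [this, hTnull]
  -- conclusion
  have hfinal : WppR p (empMeas n y) μ ≤ ∫⁻ t, ((F + G) t) ^ p ∂γ := by
    refine (WppR_le_cost (γ.map φ) hm1 hm2).trans ?_
    rw [hcost1]
    exact lintegral_mono hptwise
  calc (WppR p (empMeas n y) μ) ^ p⁻¹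
      ≤ (∫⁻ t, ((F + G) t) ^ p ∂γ) ^ p⁻¹ :=
        ENNReal.rpow_le_rpow hfinal (inv_pos.2 hp0).le
    _ ≤ (∫⁻ t, F t ^ p ∂γ) ^ p⁻¹ + (∫⁻ t, G t ^ p ∂γ) ^ p⁻¹ := by
        simpa [one_div] using hLp
    _ = _ := by rw [hA, hB]

end Glue

lemma wpp_triangle {p : ℝ} (hp : 1 ≤ p) {n : ℕ} (hn : 0 < n) (y z : Fin n → ℝ)
    (μ : Measure ℝ) [IsProbabilityMeasure μ] :
    (WppR p (empMeas n y) μ) ^ p⁻¹ ≤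
      (ENNReal.ofReal ((n:ℝ)⁻¹ * ∑ i, |y i - z i| ^ p)) ^ p⁻¹ +
      (WppR p (empMeas n z) μ) ^ p⁻¹ := by
  have hp0 : (0:ℝ) < p := lt_of_lt_of_le one_pos hp
  have h1 : (WppR p (empMeas n z) μ) ^ p⁻¹
      = ⨅ (π' : Measure (ℝ×ℝ)) (_ : π'.map Prod.fst = empMeas n z ∧ π'.map Prod.snd = μ),
        (∫⁻ w, ENNReal.ofReal (|w.1 - w.2| ^ p) ∂π') ^ p⁻¹ := by
    rw [WppR, rpow_iInf' _ (inv_pos.2 hp0)]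
    exact iInf_congr fun π' => rpow_iInf' _ (inv_pos.2 hp0)
  rw [h1, ENNReal.add_iInf]
  refine le_iInf fun π' => ?_
  rw [ENNReal.add_iInf]
  refine le_iInf fun hπ' => ?_
  exact glue_bound y z μ hp hn π' hπ'.1 hπ'.2

lemma measurable_wpp {p : ℝ} (hp : 1 ≤ p) (n : ℕ) (μ : Measure ℝ)
    [IsProbabilityMeasure μ] :
    Measurable fun y : Fin n → ℝ => WppR p (empMeas n y) μ := by
  have hp0 : (0:ℝ) < p := lt_of_lt_of_le one_pos hp
  rcases Nat.eq_zero_or_pos n with rfl | hn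
  · exact Subsingleton.measurable
  · set g : (Fin n → ℝ) → ℝ≥0∞ := fun y => (WppR p (empMeas n y) μ) ^ p⁻¹ with hg
    have hgm : Measurable g := by
      apply measurable_of_Iio
      intro a
      have hopen : IsOpen (g ⁻¹' Set.Iio a) := by
        rw [isOpen_iff_mem_nhds]
        intro z hz
        have hz' : g z < a := hz
        have hcont : Continuous fun y : Fin n → ℝ =>
            (ENNReal.ofReal ((n:ℝ)⁻¹ * ∑ i, |y i - z i| ^ p)) ^ p⁻¹ + g z := by
          refine Continuous.add ?_ continuous_const
          refine ENNReal.continuous_rpow_const.comp ?_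
          refine ENNReal.continuous_ofReal.comp ?_
          refine Continuous.mul continuous_const ?_
          refine continuous_finset_sum _ fun i _ => ?_
          exact (Real.continuous_rpow_const hp0.le).comp
            (((continuous_apply i).sub continuous_const).abs)
        refine Filter.mem_of_superset
          ((hcont.isOpen_preimage (Set.Iio a) isOpen_Iio).mem_nhds ?_) ?_
        · show (ENNReal.ofReal ((n:ℝ)⁻¹ * ∑ i, |z i - z i| ^ p)) ^ p⁻¹ + g z < a
          have h0 : ((n:ℝ)⁻¹ * ∑ i : Fin n, |z i - z i| ^ p) = 0 := by
            simp [Real.zero_rpow hp0.ne']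
          rw [h0]
          simpa [ENNReal.zero_rpow_of_pos (inv_pos.2 hp0)] using hz'
        · intro y hy
          have htri := wpp_triangle hp hn y z μ
          exact lt_of_le_of_lt htri hy
      exact hopen.measurableSet
    have heq : (fun y : Fin n → ℝ => WppR p (empMeas n y) μ) = fun y => g y ^ p := by
      funext y
      rw [hg]
      exact (ENNReal.rpow_inv_rpow hp0.ne' _).symm
    rw [heq]
    exact (ENNReal.continuous_rpow_const.measurable).comp hgm

lemma wpp_qtriangle {p : ℝ} (hp : 1 ≤ p) {n : ℕ} (hn : 0 < n) (y z : Fin n → ℝ)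
    (μ : Measure ℝ) [IsProbabilityMeasure μ] :
    WppR p (empMeas n y) μ ≤ ENNReal.ofReal ((2:ℝ) ^ (p-1)) *
      (ENNReal.ofReal ((n:ℝ)⁻¹ * ∑ i, |y i - z i| ^ p) + WppR p (empMeas n z) μ) := by
  have hp0 : (0:ℝ) < p := lt_of_lt_of_le one_pos hp
  have h := ENNReal.rpow_le_rpow (wpp_triangle hp hn y z μ) hp0.le
  rw [ENNReal.rpow_inv_rpow hp0.ne'] at h
  refine h.trans ?_
  refine (two_rpow_helper hp _ _).trans ?_
  rw [ENNReal.rpow_inv_rpow hp0.ne', ENNReal.rpow_inv_rpow hp0.ne']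
lemma block_bound {p : ℝ} (hp : 1 ≤ p) (n : ℕ) (μ : Measure ℝ) [IsProbabilityMeasure μ]
    (L : Measure (Fin n → ℝ)) :
    ∫⁻ y, WppR p (empMeas n y) μ ∂L ≤
      ENNReal.ofReal ((2:ℝ) ^ (p-1)) * (WppVec p n L (Measure.pi fun _ => μ) + epsNp p n μ) := by
  have hp0 : (0:ℝ) < p := lt_of_lt_of_le one_pos hp
  set c := ENNReal.ofReal ((2:ℝ) ^ (p-1)) with hcdef
  have hc0 : c ≠ 0 := ne_of_gt (ENNReal.ofReal_pos.2 (Real.rpow_pos_of_pos two_pos _))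
  have hctop : c ≠ ∞ := ENNReal.ofReal_ne_top
  rcases Nat.eq_zero_or_pos n with rfl | hn
  · -- n = 0
    have hW : ∀ y : Fin 0 → ℝ, WppR p (empMeas 0 y) μ = ∞ := by
      intro y
      rw [WppR, iInf_eq_top]
      intro π
      rw [iInf_eq_top]
      intro hπ
      exfalso
      have h0 : empMeas 0 y = 0 := by simp [empMeas]
      have hπ0 : π = 0 := by
        have h2 := congrArg (fun m : Measure ℝ => m Set.univ) hπ.1
        simp only [Measure.map_apply measurable_fst MeasurableSet.univ, Set.preimage_univ,
          h0] at h2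
        simpa [Measure.measure_univ_eq_zero] using h2
      have h3 := hπ.2
      rw [hπ0, Measure.map_zero] at h3
      have h4 := congrArg (fun m : Measure ℝ => m Set.univ) h3
      simp [measure_univ] at h4
    have heps : epsNp p 0 μ = ∞ := by
      rw [epsNp]
      simp only [hW]
      rw [lintegral_const, measure_univ, mul_one]
    rw [heps, add_top, ENNReal.mul_top hc0]
    exact le_top
  · -- main case
    have hf := measurable_wpp hp n μ
    have key : ∀ π : Measure ((Fin n → ℝ) × (Fin n → ℝ)),
        π.map Prod.fst = L → π.map Prod.snd = Measure.pi (fun _ => μ) →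
        ∫⁻ y, WppR p (empMeas n y) μ ∂L ≤
          c * ((∫⁻ w, ENNReal.ofReal ((n:ℝ)⁻¹ * ∑ i, |w.1 i - w.2 i| ^ p) ∂π) + epsNp p n μ) := by
      intro π hπ1 hπ2
      have hcostm : Measurable fun w : (Fin n → ℝ) × (Fin n → ℝ) =>
          ENNReal.ofReal ((n:ℝ)⁻¹ * ∑ i, |w.1 i - w.2 i| ^ p) := by
        refine ENNReal.measurable_ofReal.comp (Measurable.const_mul ?_ _)
        refine Finset.measurable_sum _ fun i _ => ?_
        exact (((measurable_fst.comp measurable_id).eval.sub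
          (measurable_snd.comp measurable_id).eval).abs.pow_const p)
      calc ∫⁻ y, WppR p (empMeas n y) μ ∂L
          = ∫⁻ w, WppR p (empMeas n w.1) μ ∂π := by
            rw [← hπ1, lintegral_map hf measurable_fst]
        _ ≤ ∫⁻ w, c * (ENNReal.ofReal ((n:ℝ)⁻¹ * ∑ i, |w.1 i - w.2 i| ^ p)
              + WppR p (empMeas n w.2) μ) ∂π :=
            lintegral_mono fun w => wpp_qtriangle hp hn w.1 w.2 μ
        _ = c * ((∫⁻ w, ENNReal.ofReal ((n:ℝ)⁻¹ * ∑ i, |w.1 i - w.2 i| ^ p) ∂π)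
              + ∫⁻ w, WppR p (empMeas n w.2) μ ∂π) := by
            have hfs : Measurable fun w : (Fin n → ℝ) × (Fin n → ℝ) =>
                WppR p (empMeas n w.2) μ := hf.comp measurable_snd
            rw [lintegral_const_mul' c _ hctop, lintegral_add_left hcostm]
        _ = c * ((∫⁻ w, ENNReal.ofReal ((n:ℝ)⁻¹ * ∑ i, |w.1 i - w.2 i| ^ p) ∂π)
              + epsNp p n μ) := by
            rw [epsNp, ← hπ2, lintegral_map hf measurable_snd]
    refine ENNReal.le_of_forall_pos_le_add fun ε' hε' hb => ?_
    have hWtop : WppVec p n L (Measure.pi fun _ => μ) ≠ ∞ := by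
      intro h
      rw [h, top_add, ENNReal.mul_top hc0] at hb
      exact (lt_irrefl _ hb).elim
    set δ : ℝ≥0∞ := (ε' : ℝ≥0∞) / c with hδdef
    have hδ0 : δ ≠ 0 := by
      rw [hδdef]
      simp [ENNReal.div_eq_zero_iff, hctop, (ENNReal.coe_ne_zero).2 hε'.ne']
    have hlt : WppVec p n L (Measure.pi fun _ => μ)
        < WppVec p n L (Measure.pi fun _ => μ) + δ := ENNReal.lt_add_right hWtop hδ0
    conv_lhs at hlt => rw [WppVec]
    obtain ⟨π, hπlt⟩ := iInf_lt_iff.1 hlt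
    obtain ⟨hπ, hcost⟩ := iInf_lt_iff.1 hπlt
    calc ∫⁻ y, WppR p (empMeas n y) μ ∂L
        ≤ c * ((∫⁻ w, ENNReal.ofReal ((n:ℝ)⁻¹ * ∑ i, |w.1 i - w.2 i| ^ p) ∂π) + epsNp p n μ) :=
          key π hπ.1 hπ.2
      _ ≤ c * ((WppVec p n L (Measure.pi fun _ => μ) + δ) + epsNp p n μ) := by
          exact mul_le_mul_right (add_le_add_left hcost.le _) c
      _ = c * (WppVec p n L (Measure.pi fun _ => μ) + epsNp p n μ) + c * δ := by
          rw [add_right_comm, mul_add]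
      _ = c * (WppVec p n L (Measure.pi fun _ => μ) + epsNp p n μ) + ε' := by
          congr 1
          rw [hδdef, ENNReal.mul_div_cancel hc0 hctop]

lemma wpp_convex {p : ℝ} {ι : Type*} (s : Finset ι) (w : ι → ℝ≥0∞) (ν : ι → Measure ℝ)
    (μ : Measure ℝ) (hw : ∑ j ∈ s, w j = 1) :
    WppR p (∑ j ∈ s, w j • ν j) μ ≤ ∑ j ∈ s, w j * WppR p (ν j) μ := by
  classical
  refine ENNReal.le_of_forall_pos_le_add fun ε hε hb => ?_
  have hfin : ∀ j ∈ s, w j ≠ 0 → WppR p (ν j) μ ≠ ∞ := by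
    intro j hj hw0 htop
    have hterm : w j * WppR p (ν j) μ = ∞ := by rw [htop, ENNReal.mul_top hw0]
    have hsum : (∑ j ∈ s, w j * WppR p (ν j) μ) = ∞ := ENNReal.sum_eq_top.2 ⟨j, hj, hterm⟩
    rw [hsum] at hb; exact lt_irrefl _ hb
  have hchoice : ∀ j, ∃ π : Measure (ℝ × ℝ),
      (j ∈ s → w j ≠ 0 → (π.map Prod.fst = ν j ∧ π.map Prod.snd = μ ∧
        (∫⁻ z, ENNReal.ofReal (|z.1 - z.2| ^ p) ∂π) ≤ WppR p (ν j) μ + ε)) ∧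
      (¬ (j ∈ s ∧ w j ≠ 0) → π = 0) := by
    intro j
    by_cases hj : j ∈ s ∧ w j ≠ 0
    · have hlt : WppR p (ν j) μ < WppR p (ν j) μ + ε :=
        ENNReal.lt_add_right (hfin j hj.1 hj.2) (by exact_mod_cast hε.ne')
      conv_lhs at hlt => rw [WppR]
      obtain ⟨π, hπlt⟩ := iInf_lt_iff.1 hlt
      obtain ⟨hπ, hcost⟩ := iInf_lt_iff.1 hπlt
      exact ⟨π, fun _ _ => ⟨hπ.1, hπ.2, hcost.le⟩, fun h => absurd hj h⟩
    · exact ⟨0, fun h1 h2 => absurd ⟨h1, h2⟩ hj, fun _ => rfl⟩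
  choose π hπgood hπzero using hchoice
  set PP : Measure (ℝ × ℝ) := ∑ j ∈ s, w j • π j with hPP
  have hmar1 : PP.map Prod.fst = ∑ j ∈ s, w j • ν j := by
    rw [hPP, map_finset_sum_meas _ _ measurable_fst]
    refine Finset.sum_congr rfl fun j hj => ?_
    by_cases h0 : w j = 0
    · simp [h0]
    · rw [Measure.map_smul, (hπgood j hj h0).1]
  have hmar2 : PP.map Prod.snd = μ := by
    rw [hPP, map_finset_sum_meas _ _ measurable_snd]
    have hstep : ∀ j ∈ s, (w j • π j).map Prod.snd = w j • μ := by
      intro j hj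
      by_cases h0 : w j = 0
      · simp [h0]
      · rw [Measure.map_smul, (hπgood j hj h0).2.1]
    rw [Finset.sum_congr rfl hstep, ← Finset.sum_smul, hw, one_smul]
  refine (WppR_le_cost PP hmar1 hmar2).trans ?_
  rw [hPP, lintegral_finset_sum_measure]
  calc ∑ j ∈ s, ∫⁻ z, ENNReal.ofReal (|z.1 - z.2| ^ p) ∂(w j • π j)
      = ∑ j ∈ s, w j * ∫⁻ z, ENNReal.ofReal (|z.1 - z.2| ^ p) ∂(π j) := by
        simp [lintegral_smul_measure]
    _ ≤ ∑ j ∈ s, w j * (WppR p (ν j) μ + ε) := by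
        refine Finset.sum_le_sum fun j hj => ?_
        by_cases h0 : w j = 0
        · simp [h0]
        · exact mul_le_mul_right (hπgood j hj h0).2.2 _
    _ = ∑ j ∈ s, (w j * WppR p (ν j) μ + w j * ε) := by simp [mul_add]
    _ = (∑ j ∈ s, w j * WppR p (ν j) μ) + (∑ j ∈ s, w j) * ε := by
        rw [Finset.sum_add_distrib, Finset.sum_mul]
    _ = _ := by rw [hw, one_mul]

lemma law_transfer {Ω : Type*} [MeasurableSpace Ω] (ℙ : Measure Ω) [IsProbabilityMeasure ℙ]
    {m : ℕ} (hm0 : 0 < m) (Y : Ω → Fin m → ℝ) (hY : Measurable Y)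
    (hexch : ∀ σ : Equiv.Perm (Fin m),
      Measure.map (fun ω => fun i : Fin m => Y ω (σ i)) ℙ = Measure.map Y ℙ)
    (b e : ℕ) (hbe : ∀ i : Fin b, e + (i:ℕ) < m) (hb : b ≤ m) :
    Measure.map (fun ω => fun i : Fin b => Y ω ⟨e + i, hbe i⟩) ℙ
      = Measure.map (fun ω => fun i : Fin b => Y ω (Fin.castLE hb i)) ℙ := by
  haveI : NeZero m := ⟨hm0.ne'⟩
  rcases Nat.eq_zero_or_pos b with rfl | hbpos
  · have hmeas1 : Measurable fun ω => fun i : Fin 0 => Y ω ⟨e + i, hbe i⟩ :=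
      measurable_pi_lambda _ fun i => i.elim0
    have hmeas2 : Measurable fun ω => fun i : Fin 0 => Y ω (Fin.castLE hb i) :=
      measurable_pi_lambda _ fun i => i.elim0
    haveI h1 := Measure.isProbabilityMeasure_map (μ := ℙ) hmeas1.aemeasurable
    haveI h2 := Measure.isProbabilityMeasure_map (μ := ℙ) hmeas2.aemeasurable
    ext s hs
    rcases Set.eq_empty_or_nonempty s with rfl | ⟨x, hx⟩
    · simp
    · have hsuniv : s = Set.univ := by
        ext w
        refine ⟨fun _ => trivial, fun _ => ?_⟩
        rwa [Subsingleton.elim w x]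
      rw [hsuniv]
      rw [measure_univ, measure_univ]
  · set cc : Fin m := ⟨e, lt_of_le_of_lt (Nat.le_add_right e 0) (hbe ⟨0, hbpos⟩)⟩ with hcc
    set σ : Equiv.Perm (Fin m) := Equiv.addLeft cc with hσ
    have hYσ : Measurable fun ω => fun i : Fin m => Y ω (σ i) :=
      measurable_pi_lambda _ fun i => (measurable_pi_apply (σ i)).comp hY
    have hproj : Measurable fun y : Fin m → ℝ => fun i : Fin b => y (Fin.castLE hb i) :=
      measurable_pi_lambda _ fun i => measurable_pi_apply _
    have h2 := congrArg (fun ρ : Measure (Fin m → ℝ) =>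
      ρ.map (fun y : Fin m → ℝ => fun i : Fin b => y (Fin.castLE hb i))) (hexch σ)
    simp only [Measure.map_map hproj hYσ, Measure.map_map hproj hY] at h2
    have hcomp : ((fun y : Fin m → ℝ => fun i : Fin b => y (Fin.castLE hb i))
        ∘ (fun ω => fun i : Fin m => Y ω (σ i)))
        = fun ω => fun i : Fin b => Y ω ⟨e + i, hbe i⟩ := by
      funext ω
      funext i
      simp only [Function.comp_apply]
      congr 1
      apply Fin.ext
      show ((cc + Fin.castLE hb i : Fin m) : ℕ) = e + i
      rw [Fin.val_add]
      simp only [hcc, Fin.castLE]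
      exact Nat.mod_eq_of_lt (hbe i)
    rw [hcomp] at h2
    exact h2

lemma sum_range_mul {M : Type*} [AddCommMonoid M] (g : ℕ → M) (k n : ℕ) :
    ∑ i ∈ Finset.range (k * n), g i
      = ∑ j ∈ Finset.range k, ∑ i ∈ Finset.range n, g (j * n + i) := by
  induction k with
  | zero => simp
  | succ k ih =>
    rw [Nat.succ_mul, Finset.sum_range_add, ih, Finset.sum_range_succ]

set_option maxHeartbeats 1000000 in
lemma emp_decomp {p : ℝ} {m k n ℓ : ℕ} (hm : m = k * n + ℓ) (hm0 : 0 < m) (hn : 0 < n)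
    (hblk : ∀ (j : Fin k) (i : Fin n), (j:ℕ) * n + (i:ℕ) < m)
    (htail : ∀ i : Fin ℓ, k * n + (i:ℕ) < m)
    (v : Fin m → ℝ) (μ : Measure ℝ) :
    WppR p (empMeas m v) μ ≤
      (∑ j : Fin k, ((n:ℝ≥0∞)/(m:ℝ≥0∞)) *
          WppR p (empMeas n fun i => v ⟨(j:ℕ) * n + i, hblk j i⟩) μ)
      + ((ℓ:ℝ≥0∞)/(m:ℝ≥0∞)) * WppR p (empMeas ℓ fun i => v ⟨k * n + i, htail i⟩) μ := by
  classical
  have hn0 : (n:ℝ≥0∞) ≠ 0 := Nat.cast_ne_zero.2 hn.ne'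
  have hntop : (n:ℝ≥0∞) ≠ ∞ := ENNReal.natCast_ne_top n
  have hmne : (m:ℝ≥0∞) ≠ 0 := Nat.cast_ne_zero.2 hm0.ne'
  have hmtop : (m:ℝ≥0∞) ≠ ∞ := ENNReal.natCast_ne_top m
  set wgt : Fin (k+1) → ℝ≥0∞ :=
    fun j => if (j:ℕ) < k then (n:ℝ≥0∞)/(m:ℝ≥0∞) else (ℓ:ℝ≥0∞)/(m:ℝ≥0∞) with hwgt
  set msr : Fin (k+1) → Measure ℝ := fun j =>
    if h : (j:ℕ) < k then empMeas n (fun i => v ⟨(j:ℕ) * n + i, hblk ⟨(j:ℕ), h⟩ i⟩)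
    else empMeas ℓ (fun i => v ⟨k * n + i, htail i⟩) with hmsr
  have hcastlt : ∀ j : Fin k, ((Fin.castSucc j : Fin (k+1)) : ℕ) < k := fun j => by
    simpa using j.2
  have hlastlt : ¬ ((Fin.last k : Fin (k+1)) : ℕ) < k := by simp
  have hwsum : ∑ j, wgt j = 1 := by
    rw [Fin.sum_univ_castSucc]
    have h1 : ∀ j : Fin k, wgt (Fin.castSucc j) = (n:ℝ≥0∞)/(m:ℝ≥0∞) := fun j => by
      rw [hwgt]; exact if_pos (hcastlt j)
    have h2 : wgt (Fin.last k) = (ℓ:ℝ≥0∞)/(m:ℝ≥0∞) := by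
      rw [hwgt]; exact if_neg hlastlt
    rw [Finset.sum_congr rfl fun j _ => h1 j, h2, Finset.sum_const, Finset.card_univ,
      Fintype.card_fin, nsmul_eq_mul]
    rw [div_eq_mul_inv, ← mul_assoc, ← Nat.cast_mul, ← div_eq_mul_inv,
      ENNReal.div_add_div_same, ← Nat.cast_add, ← hm]
    exact ENNReal.div_self hmne hmtop
  -- dirac decomposition
  set g : ℕ → Measure ℝ := fun i => Measure.dirac (v ⟨i % m, Nat.mod_lt i hm0⟩) with hgdef
  have hgi : ∀ (i : ℕ) (h : i < m), g i = Measure.dirac (v ⟨i, h⟩) := by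
    intro i h
    have hfin : (⟨i % m, Nat.mod_lt i hm0⟩ : Fin m) = ⟨i, h⟩ := Fin.ext (Nat.mod_eq_of_lt h)
    rw [hgdef]
    exact congrArg (fun x : Fin m => Measure.dirac (v x)) hfin
  have h1 : (∑ i : Fin m, Measure.dirac (v i)) = ∑ i ∈ Finset.range m, g i := by
    rw [← Fin.sum_univ_eq_sum_range g m]
    exact Finset.sum_congr rfl fun i _ => by rw [hgi i.1 i.2]
  have h2 : ∑ i ∈ Finset.range m, g i
      = (∑ j ∈ Finset.range k, ∑ i ∈ Finset.range n, g (j * n + i))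
        + ∑ i ∈ Finset.range ℓ, g (k * n + i) := by
    conv_lhs => rw [hm]
    rw [Finset.sum_range_add, sum_range_mul]
  have hcoefn : (n:ℝ≥0∞)/(m:ℝ≥0∞) * (n:ℝ≥0∞)⁻¹ = (m:ℝ≥0∞)⁻¹ := by
    rw [div_eq_mul_inv, mul_comm (n:ℝ≥0∞) ((m:ℝ≥0∞)⁻¹), mul_assoc,
      ENNReal.mul_inv_cancel hn0 hntop, mul_one]
  have hblkmeas : ∀ j : Fin k,
      ((n:ℝ≥0∞)/(m:ℝ≥0∞)) • empMeas n (fun i => v ⟨(j:ℕ) * n + i, hblk j i⟩)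
        = (m:ℝ≥0∞)⁻¹ • ∑ i ∈ Finset.range n, g ((j:ℕ) * n + i) := by
    intro j
    rw [empMeas, smul_smul, hcoefn]
    congr 1
    rw [← Fin.sum_univ_eq_sum_range (fun i => g ((j:ℕ) * n + i)) n]
    exact Finset.sum_congr rfl fun i _ => by rw [hgi _ (hblk j i)]
  have htailmeas :
      ((ℓ:ℝ≥0∞)/(m:ℝ≥0∞)) • empMeas ℓ (fun i => v ⟨k * n + i, htail i⟩)
        = (m:ℝ≥0∞)⁻¹ • ∑ i ∈ Finset.range ℓ, g (k * n + i) := by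
    rcases Nat.eq_zero_or_pos ℓ with hl0 | hlpos
    · have hempty : (Finset.range ℓ) = ∅ := by rw [hl0]; rfl
      have huniv : (Finset.univ : Finset (Fin ℓ)) = ∅ := by
        rw [Finset.univ_eq_empty_iff]
        rw [hl0]; exact Fin.isEmpty'
      rw [empMeas, huniv, hempty]
      simp [hl0]
    · have hl0' : (ℓ:ℝ≥0∞) ≠ 0 := Nat.cast_ne_zero.2 hlpos.ne'
      have hltop : (ℓ:ℝ≥0∞) ≠ ∞ := ENNReal.natCast_ne_top ℓ
      have hcoefl : (ℓ:ℝ≥0∞)/(m:ℝ≥0∞) * (ℓ:ℝ≥0∞)⁻¹ = (m:ℝ≥0∞)⁻¹ := by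
        rw [div_eq_mul_inv, mul_comm (ℓ:ℝ≥0∞) ((m:ℝ≥0∞)⁻¹), mul_assoc,
          ENNReal.mul_inv_cancel hl0' hltop, mul_one]
      rw [empMeas, smul_smul, hcoefl]
      congr 1
      rw [← Fin.sum_univ_eq_sum_range (fun i => g (k * n + i)) ℓ]
      exact Finset.sum_congr rfl fun i _ => by rw [hgi _ (htail i)]
  have hmix : empMeas m v = ∑ j : Fin (k+1), wgt j • msr j := by
    rw [Fin.sum_univ_castSucc]
    have hc : ∀ j : Fin k, wgt (Fin.castSucc j) • msr (Fin.castSucc j)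
        = (m:ℝ≥0∞)⁻¹ • ∑ i ∈ Finset.range n, g ((j:ℕ) * n + i) := by
      intro j
      rw [hwgt, hmsr]
      simp only [Fin.coe_castSucc]
      rw [if_pos j.isLt, dif_pos j.isLt]
      exact hblkmeas j
    have hlast : wgt (Fin.last k) • msr (Fin.last k)
        = (m:ℝ≥0∞)⁻¹ • ∑ i ∈ Finset.range ℓ, g (k * n + i) := by
      rw [hwgt, hmsr]
      simp only [if_neg hlastlt, dif_neg hlastlt]
      exact htailmeas
    rw [Finset.sum_congr rfl fun j _ => hc j, hlast, ← Finset.smul_sum, ← smul_add]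
    rw [Fin.sum_univ_eq_sum_range (fun j => ∑ i ∈ Finset.range n, g (j * n + i)) k, ← h2, ← h1]
    rfl
  have hcvx := wpp_convex (p := p) (Finset.univ) wgt msr μ hwsum
  rw [← hmix] at hcvx
  refine hcvx.trans (le_of_eq ?_)
  rw [Fin.sum_univ_castSucc]
  congr 1
  · refine Finset.sum_congr rfl fun j _ => ?_
    rw [hwgt, hmsr]
    simp only [Fin.coe_castSucc]
    rw [if_pos j.isLt, dif_pos j.isLt]
  · rw [hwgt, hmsr]
    simp only []
    rw [if_neg hlastlt, dif_neg hlastlt]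


set_option maxHeartbeats 1000000 in
/-- Lemma 6 of the paper in full generality. For an exchangeable vector
`Y ∈ ℝᵐ`, `μ ∈ P(ℝ)` with finite `p`-th moments, and `m = k·n + ℓ` with `0 ≤ ℓ ≤ n-1`,
`(1/2^{p-1})·E[W_p^p(μ̂_Y, μ)] ≤ (kn/m)·(W_p^p(Lawⁿ(Y), μ^{⊗n}) + ε_{n,p}(μ))
  + (ℓ/m)·(W_p^p(Lawˡ(Y), μ^{⊗ℓ}) + ε_{ℓ,p}(μ))`. -/
theorem stmt10 {Ω : Type*} [MeasurableSpace Ω] (ℙ : Measure Ω) [IsProbabilityMeasure ℙ]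
    (k n ℓ m : ℕ) (hn : 0 < n) (hℓ : ℓ ≤ n - 1) (hm : m = k * n + ℓ)
    (hnm : n ≤ m) (hℓm : ℓ ≤ m)
    (Y : Ω → Fin m → ℝ) (hY : Measurable Y)
    (hexch : ∀ σ : Equiv.Perm (Fin m),
      Measure.map (fun ω => fun i : Fin m => Y ω (σ i)) ℙ = Measure.map Y ℙ)
    (p : ℝ) (hp : 1 ≤ p)
    (hYmom : ∀ i, Integrable (fun ω => |Y ω i| ^ p) ℙ)
    (μ : Measure ℝ) [IsProbabilityMeasure μ]
    (hμ : Integrable (fun u => |u| ^ p) μ) :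
    (ENNReal.ofReal ((2 : ℝ) ^ (p - 1)))⁻¹ * ∫⁻ ω, WppR p (empMeas m (Y ω)) μ ∂ℙ
      ≤ (((k * n : ℕ) : ℝ≥0∞) / (m : ℝ≥0∞)) *
          (WppVec p n
            (Measure.map (fun ω => fun i : Fin n => Y ω (Fin.castLE hnm i)) ℙ)
            (Measure.pi fun _ : Fin n => μ)
           + epsNp p n μ)
        + ((ℓ : ℝ≥0∞) / (m : ℝ≥0∞)) *
          (WppVec p ℓ
            (Measure.map (fun ω => fun i : Fin ℓ => Y ω (Fin.castLE hℓm i)) ℙ)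
            (Measure.pi fun _ : Fin ℓ => μ)
           + epsNp p ℓ μ) := by
  classical
  have hp0 : (0:ℝ) < p := lt_of_lt_of_le one_pos hp
  set c := ENNReal.ofReal ((2 : ℝ) ^ (p - 1)) with hcdef
  have hc0 : c ≠ 0 := ne_of_gt (ENNReal.ofReal_pos.2 (Real.rpow_pos_of_pos two_pos _))
  have hctop : c ≠ ∞ := ENNReal.ofReal_ne_top
  have hm0 : 0 < m := lt_of_lt_of_le hn hnm
  have hblk : ∀ (j : Fin k) (i : Fin n), (j:ℕ) * n + (i:ℕ) < m := by
    intro j i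
    have h1 : ((j:ℕ) + 1) * n ≤ k * n := Nat.mul_le_mul_right n j.2
    have h2 : (i:ℕ) < n := i.2
    have h3 : ((j:ℕ) + 1) * n = (j:ℕ) * n + n := by ring
    omega
  have htail : ∀ i : Fin ℓ, k * n + (i:ℕ) < m := by
    intro i; have := i.2; omega
  set Ln := Measure.map (fun ω => fun i : Fin n => Y ω (Fin.castLE hnm i)) ℙ with hLn
  set Ll := Measure.map (fun ω => fun i : Fin ℓ => Y ω (Fin.castLE hℓm i)) ℙ with hLl
  have hBmeas : ∀ j : Fin k,
      Measurable fun ω => fun i : Fin n => Y ω ⟨(j:ℕ) * n + i, hblk j i⟩ :=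
    fun j => measurable_pi_lambda _ fun i => (measurable_pi_apply _).comp hY
  have hTmeas : Measurable fun ω => fun i : Fin ℓ => Y ω ⟨k * n + i, htail i⟩ :=
    measurable_pi_lambda _ fun i => (measurable_pi_apply _).comp hY
  have hfn := measurable_wpp hp n μ
  have hfl := measurable_wpp hp ℓ μ
  -- per block laws
  have hJn : ∀ j : Fin k,
      ∫⁻ ω, WppR p (empMeas n (fun i => Y ω ⟨(j:ℕ) * n + i, hblk j i⟩)) μ ∂ℙ
        = ∫⁻ y, WppR p (empMeas n y) μ ∂Ln := by
    intro j
    have hlaw := law_transfer ℙ hm0 Y hY hexch n ((j:ℕ) * n) (fun i => hblk j i) hnm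
    rw [← lintegral_map hfn (hBmeas j), hlaw, hLn]
  have hJl : ∫⁻ ω, WppR p (empMeas ℓ (fun i => Y ω ⟨k * n + i, htail i⟩)) μ ∂ℙ
      = ∫⁻ y, WppR p (empMeas ℓ y) μ ∂Ll := by
    have hlaw := law_transfer ℙ hm0 Y hY hexch ℓ (k * n) (fun i => htail i) hℓm
    rw [← lintegral_map hfl hTmeas, hlaw, hLl]
  -- step A+B
  have hmain : ∫⁻ ω, WppR p (empMeas m (Y ω)) μ ∂ℙ
      ≤ (k : ℝ≥0∞) * (((n:ℝ≥0∞)/(m:ℝ≥0∞)) * ∫⁻ y, WppR p (empMeas n y) μ ∂Ln)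
        + ((ℓ:ℝ≥0∞)/(m:ℝ≥0∞)) * ∫⁻ y, WppR p (empMeas ℓ y) μ ∂Ll := by
    have hstep := lintegral_mono (μ := ℙ) fun ω =>
      emp_decomp (p := p) hm hm0 hn hblk htail (Y ω) μ
    refine hstep.trans (le_of_eq ?_)
    have hmeasj : ∀ j : Fin k, Measurable fun ω =>
        ((n:ℝ≥0∞)/(m:ℝ≥0∞)) *
          WppR p (empMeas n fun i => Y ω ⟨(j:ℕ) * n + i, hblk j i⟩) μ :=
      fun j => (hfn.comp (hBmeas j)).const_mul _
    have hsummeas : Measurable fun ω => ∑ j : Fin k,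
        ((n:ℝ≥0∞)/(m:ℝ≥0∞)) *
          WppR p (empMeas n fun i => Y ω ⟨(j:ℕ) * n + i, hblk j i⟩) μ :=
      Finset.measurable_sum _ fun j _ => hmeasj j
    rw [lintegral_add_left hsummeas, lintegral_finset_sum _ fun j _ => hmeasj j]
    congr 1
    · have : ∀ j : Fin k, ∫⁻ ω, ((n:ℝ≥0∞)/(m:ℝ≥0∞)) *
          WppR p (empMeas n fun i => Y ω ⟨(j:ℕ) * n + i, hblk j i⟩) μ ∂ℙ
          = ((n:ℝ≥0∞)/(m:ℝ≥0∞)) * ∫⁻ y, WppR p (empMeas n y) μ ∂Ln := by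
        intro j
        have hh : Measurable fun ω =>
            WppR p (empMeas n fun i => Y ω ⟨(j:ℕ) * n + ↑i, hblk j i⟩) μ :=
          hfn.comp (hBmeas j)
        rw [lintegral_const_mul _ hh, hJn j]
      rw [Finset.sum_congr rfl fun j _ => this j, Finset.sum_const, Finset.card_univ,
        Fintype.card_fin, nsmul_eq_mul]
    · have hh : Measurable fun ω =>
          WppR p (empMeas ℓ fun i => Y ω ⟨k * n + ↑i, htail i⟩) μ :=
        hfl.comp hTmeas
      rw [lintegral_const_mul _ hh, hJl]
  -- block bounds
  have hbn := block_bound hp n μ Ln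
  have hbl := block_bound hp ℓ μ Ll
  -- combine
  have hcomb : ∫⁻ ω, WppR p (empMeas m (Y ω)) μ ∂ℙ
      ≤ c * ((((k * n : ℕ) : ℝ≥0∞) / (m : ℝ≥0∞)) *
            (WppVec p n Ln (Measure.pi fun _ : Fin n => μ) + epsNp p n μ)
          + ((ℓ : ℝ≥0∞) / (m : ℝ≥0∞)) *
            (WppVec p ℓ Ll (Measure.pi fun _ : Fin ℓ => μ) + epsNp p ℓ μ)) := by
    refine hmain.trans ?_
    have h1 : (k : ℝ≥0∞) * (((n:ℝ≥0∞)/(m:ℝ≥0∞)) * ∫⁻ y, WppR p (empMeas n y) μ ∂Ln)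
        ≤ (k : ℝ≥0∞) * (((n:ℝ≥0∞)/(m:ℝ≥0∞)) *
            (c * (WppVec p n Ln (Measure.pi fun _ : Fin n => μ) + epsNp p n μ))) :=
      mul_le_mul_right (mul_le_mul_right hbn _) _
    have h2 : ((ℓ:ℝ≥0∞)/(m:ℝ≥0∞)) * ∫⁻ y, WppR p (empMeas ℓ y) μ ∂Ll
        ≤ ((ℓ:ℝ≥0∞)/(m:ℝ≥0∞)) *
            (c * (WppVec p ℓ Ll (Measure.pi fun _ : Fin ℓ => μ) + epsNp p ℓ μ)) :=
      mul_le_mul_right hbl _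
    refine (add_le_add h1 h2).trans (le_of_eq ?_)
    push_cast
    rw [div_eq_mul_inv, div_eq_mul_inv, div_eq_mul_inv]
    ring
  calc c⁻¹ * ∫⁻ ω, WppR p (empMeas m (Y ω)) μ ∂ℙ
      ≤ c⁻¹ * (c * ((((k * n : ℕ) : ℝ≥0∞) / (m : ℝ≥0∞)) *
            (WppVec p n Ln (Measure.pi fun _ : Fin n => μ) + epsNp p n μ)
          + ((ℓ : ℝ≥0∞) / (m : ℝ≥0∞)) *
            (WppVec p ℓ Ll (Measure.pi fun _ : Fin ℓ => μ) + epsNp p ℓ μ))) :=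
        mul_le_mul_right hcomb _
    _ = _ := by
        rw [← mul_assoc, ENNReal.inv_mul_cancel hc0 hctop, one_mul]
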